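/- Let ℓ be a nonnegative integer, N a positive integer, and α, z complex numbers with Re(z) > 0 and Re(α) > 0. Then ∑_{n≥1} (-1)^{n-1} n^ℓ e^{-n²z - nα} = (-1)^ℓ ∑_{k=0}^{N-1} ((-z)^k / k!) · d^{2k+ℓ}/dα^{2k+ℓ} [1/(1+e^α)] + z^N R_N(ℓ, α, z), where R_N(ℓ, α, z) = ((-1)^{N+ℓ}/(N-1)!) ∫_0^1 (1-t)^{N-1} d^{2N+ℓ}/dα^{2N+ℓ} [∑_{n≥1} (-1)^{n-1} e^{-n²zt - nα}] dt. -/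

import Mathlib

open scoped BigOperators

lemma summable_aux (j : ℕ) {ε : ℝ} (hε : 0 < ε) :
    Summable fun n : ℕ => ((n : ℝ) + 1) ^ j * Real.exp (-((n : ℝ) + 1) * ε) := by
  have hr : ‖Real.exp (-ε)‖ < 1 := by
    rw [Real.norm_eq_abs, abs_of_pos (Real.exp_pos _)]
    exact Real.exp_lt_one_iff.mpr (by linarith)
  have h := (summable_pow_mul_geometric_of_norm_lt_one j hr).comp_injective
    (add_left_injective 1)
  refine h.congr fun n => ?_
  simp only [Function.comp]
  rw [show ((n + 1 : ℕ) : ℝ) = (n : ℝ) + 1 by push_cast; ring, ← Real.exp_nat_mul]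
  push_cast
  ring_nf

lemma norm_term_le (c : ℕ → ℂ) (hc : ∀ n, ‖c n‖ ≤ 1) (m : ℕ) (n : ℕ) {y : ℂ} {ε : ℝ}
    (hy : ε ≤ y.re) :
    ‖c n * (-((n : ℂ) + 1)) ^ m * Complex.exp (-((n : ℂ) + 1) * y)‖
      ≤ ((n : ℝ) + 1) ^ m * Real.exp (-((n : ℝ) + 1) * ε) := by
  rw [norm_mul, norm_mul, norm_pow, norm_neg]
  have h1 : ‖((n : ℂ) + 1)‖ = (n : ℝ) + 1 := by
    rw [show ((n : ℂ) + 1) = ((n + 1 : ℕ) : ℂ) by push_cast; ring, Complex.norm_natCast]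
    push_cast; ring
  have h2 : ‖Complex.exp (-((n : ℂ) + 1) * y)‖ = Real.exp (-((n : ℝ) + 1) * y.re) := by
    rw [Complex.norm_exp]
    congr 1
    simp [Complex.mul_re]
  rw [h1, h2]
  have h3 : Real.exp (-((n : ℝ) + 1) * y.re) ≤ Real.exp (-((n : ℝ) + 1) * ε) := by
    apply Real.exp_le_exp.mpr
    have : (0 : ℝ) ≤ (n : ℝ) + 1 := by positivity
    nlinarith
  calc ‖c n‖ * ((n : ℝ) + 1) ^ m * Real.exp (-((n : ℝ) + 1) * y.re)
      ≤ 1 * ((n : ℝ) + 1) ^ m * Real.exp (-((n : ℝ) + 1) * ε) := by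
        apply mul_le_mul (mul_le_mul_of_nonneg_right (hc n) (by positivity)) h3
          (Real.exp_pos _).le (by positivity)
    _ = ((n : ℝ) + 1) ^ m * Real.exp (-((n : ℝ) + 1) * ε) := by ring

lemma hasDerivAt_term (c : ℕ → ℂ) (m : ℕ) (n : ℕ) (y : ℂ) :
    HasDerivAt (fun β : ℂ => c n * (-((n : ℂ) + 1)) ^ m * Complex.exp (-((n : ℂ) + 1) * β))
      (c n * (-((n : ℂ) + 1)) ^ (m + 1) * Complex.exp (-((n : ℂ) + 1) * y)) y := by
  have h := (((hasDerivAt_id y).const_mul (-((n : ℂ) + 1))).cexp).const_mul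
    (c n * (-((n : ℂ) + 1)) ^ m)
  refine h.congr_deriv ?_
  simp only [id_eq]
  rw [pow_succ]
  ring

lemma summable_term (c : ℕ → ℂ) (hc : ∀ n, ‖c n‖ ≤ 1) (m : ℕ) {y : ℂ} (hy : 0 < y.re) :
    Summable fun n : ℕ => c n * (-((n : ℂ) + 1)) ^ m * Complex.exp (-((n : ℂ) + 1) * y) :=
  Summable.of_norm_bounded (summable_aux m hy) fun n => norm_term_le c hc m n le_rfl

lemma hasDerivAt_series (c : ℕ → ℂ) (hc : ∀ n, ‖c n‖ ≤ 1) (m : ℕ) {α : ℂ} (hα : 0 < α.re) :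
    HasDerivAt (fun β : ℂ => ∑' n : ℕ, c n * (-((n : ℂ) + 1)) ^ m * Complex.exp (-((n : ℂ) + 1) * β))
      (∑' n : ℕ, c n * (-((n : ℂ) + 1)) ^ (m + 1) * Complex.exp (-((n : ℂ) + 1) * α)) α := by
  apply hasDerivAt_tsum_of_isPreconnected (summable_aux (m + 1) (half_pos hα))
    (isOpen_lt continuous_const Complex.continuous_re)
    ((convex_halfSpace_re_gt (α.re / 2)).isPreconnected)
    (fun n y _ => hasDerivAt_term c m n y)
    (fun n y hy => norm_term_le c hc (m + 1) n (le_of_lt hy))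
    (show α ∈ {β : ℂ | α.re / 2 < β.re} from by simp; linarith)
    (summable_term c hc m hα)
    (show α ∈ {β : ℂ | α.re / 2 < β.re} from by simp; linarith)

lemma iteratedDeriv_series (c : ℕ → ℂ) (hc : ∀ n, ‖c n‖ ≤ 1) (m : ℕ) :
    ∀ α : ℂ, 0 < α.re →
    iteratedDeriv m (fun β : ℂ => ∑' n : ℕ, c n * Complex.exp (-((n : ℂ) + 1) * β)) α
      = ∑' n : ℕ, c n * (-((n : ℂ) + 1)) ^ m * Complex.exp (-((n : ℂ) + 1) * α) := by
  induction m with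
  | zero => intro α hα; simp
  | succ m ih =>
    intro α hα
    rw [iteratedDeriv_succ]
    have heq : iteratedDeriv m (fun β : ℂ => ∑' n : ℕ, c n * Complex.exp (-((n : ℂ) + 1) * β))
        =ᶠ[nhds α] fun β => ∑' n : ℕ, c n * (-((n : ℂ) + 1)) ^ m * Complex.exp (-((n : ℂ) + 1) * β) := by
      filter_upwards [(isOpen_lt continuous_const Complex.continuous_re).mem_nhds
        (show α ∈ {β : ℂ | 0 < β.re} from hα)] with y hy
      exact ih y hy
    rw [heq.deriv_eq]
    exact (hasDerivAt_series c hc m hα).deriv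

lemma norm_exp_neg_lt_one {β : ℂ} (hβ : 0 < β.re) : ‖Complex.exp (-β)‖ < 1 := by
  rw [Complex.norm_exp]
  simp only [Complex.neg_re]
  exact Real.exp_lt_one_iff.mpr (by linarith)

lemma geom_eq {β : ℂ} (hβ : 0 < β.re) :
    (1 : ℂ) / (1 + Complex.exp β) = ∑' n : ℕ, (-1 : ℂ) ^ n * Complex.exp (-((n : ℂ) + 1) * β) := by
  have hr : ‖-Complex.exp (-β)‖ < 1 := by rw [norm_neg]; exact norm_exp_neg_lt_one hβ
  have ht : ∀ n : ℕ, (-1 : ℂ) ^ n * Complex.exp (-((n : ℂ) + 1) * β)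
      = (-Complex.exp (-β)) ^ n * Complex.exp (-β) := by
    intro n
    rw [show (-((n : ℂ) + 1) * β) = ((n : ℕ) : ℂ) * (-β) + (-β) by push_cast; ring,
      Complex.exp_add, Complex.exp_nat_mul, neg_pow]
    ring
  rw [tsum_congr ht, tsum_mul_right, tsum_geometric_of_norm_lt_one hr]
  have h1 : (1 : ℂ) + Complex.exp β ≠ 0 := by
    intro h
    have he : Complex.exp β = -1 := by linear_combination h
    have h3 := norm_exp_neg_lt_one hβ
    rw [Complex.exp_neg, he] at h3
    simp at h3
  have h2 : (1 : ℂ) - -Complex.exp (-β) ≠ 0 := by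
    intro h
    have he : Complex.exp (-β) = -1 := by linear_combination h
    have h3 := norm_exp_neg_lt_one hβ
    rw [he] at h3
    simp at h3
  rw [Complex.exp_neg] at h2 ⊢
  have h4 : Complex.exp β ≠ 0 := Complex.exp_ne_zero β
  field_simp
  field_simp at h2
  rw [eq_div_iff (by rw [sub_neg_eq_add, add_comm]; exact h1)]
  ring

lemma iteratedDeriv_one_div (m : ℕ) {α : ℂ} (hα : 0 < α.re) :
    iteratedDeriv m (fun β : ℂ => 1 / (1 + Complex.exp β)) α
      = ∑' n : ℕ, (-1 : ℂ) ^ n * (-((n : ℂ) + 1)) ^ m * Complex.exp (-((n : ℂ) + 1) * α) := by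
  have heq : (fun β : ℂ => 1 / (1 + Complex.exp β))
      =ᶠ[nhds α] fun β => ∑' n : ℕ, (-1 : ℂ) ^ n * Complex.exp (-((n : ℂ) + 1) * β) := by
    filter_upwards [(isOpen_lt continuous_const Complex.continuous_re).mem_nhds
      (show α ∈ {β : ℂ | 0 < β.re} from hα)] with y hy
    exact geom_eq hy
  rw [heq.iteratedDeriv_eq m]
  exact iteratedDeriv_series (fun n => (-1 : ℂ) ^ n) (fun n => by simp) m α hα
open intervalIntegral

lemma cont1 (w : ℂ) : Continuous fun t : ℝ => Complex.exp (-w * t) :=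
  Complex.continuous_exp.comp (continuous_const.mul Complex.continuous_ofReal)

lemma cont2 (m : ℕ) : Continuous fun t : ℝ => ((1 - t : ℝ) : ℂ) ^ m :=
  (Complex.continuous_ofReal.comp (continuous_const.sub continuous_id)).pow m

lemma hasDerivAt_u (w : ℂ) (t : ℝ) :
    HasDerivAt (fun t : ℝ => Complex.exp (-w * t)) (-w * Complex.exp (-w * t)) t := by
  have h := (((hasDerivAt_id (t : ℂ)).const_mul (-w)).cexp).comp_ofReal
  refine h.congr_deriv ?_
  simp only [id_eq]
  ring

lemma hasDerivAt_v (N : ℕ) (hN : 1 ≤ N) (t : ℝ) :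
    HasDerivAt (fun t : ℝ => -((1 - t : ℝ) : ℂ) ^ N / (N : ℂ)) (((1 - t : ℝ) : ℂ) ^ (N - 1)) t := by
  have hr : HasDerivAt (fun t : ℝ => -(1 - t) ^ N / (N : ℝ)) ((1 - t) ^ (N - 1)) t := by
    have h := ((((hasDerivAt_id t).const_sub 1).fun_pow N).div_const (N : ℝ)).fun_neg
    refine (h.congr_deriv ?_).congr_of_eventuallyEq (Filter.Eventually.of_forall fun x => ?_)
    · have hN0 : (N : ℝ) ≠ 0 := Nat.cast_ne_zero.mpr (by omega)
      simp only [id_eq]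
      rw [show -((N:ℝ) * (1 - t) ^ (N - 1) * -1 / N) = ((N:ℝ) * (N:ℝ)⁻¹) * (1 - t) ^ (N - 1) by ring,
        mul_inv_cancel₀ hN0, one_mul]
    · simp only [id_eq]
      ring
  have h2 := hr.ofReal_comp
  convert h2 using 2 with t
  · push_cast
    ring
  · push_cast
    ring

lemma ibp (w : ℂ) (N : ℕ) (hN : 1 ≤ N) :
    (∫ t in (0:ℝ)..1, ((1 - t : ℝ) : ℂ) ^ (N - 1) * Complex.exp (-w * t))
      = 1 / N - w / N * ∫ t in (0:ℝ)..1, ((1 - t : ℝ) : ℂ) ^ N * Complex.exp (-w * t) := by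
  have h := intervalIntegral.integral_mul_deriv_eq_deriv_mul
    (u := fun t : ℝ => Complex.exp (-w * t))
    (v := fun t : ℝ => -((1 - t : ℝ) : ℂ) ^ N / (N : ℂ))
    (u' := fun t : ℝ => -w * Complex.exp (-w * t))
    (v' := fun t : ℝ => ((1 - t : ℝ) : ℂ) ^ (N - 1))
    (fun x _ => hasDerivAt_u w x) (fun x _ => hasDerivAt_v N hN x)
    ((continuous_const.mul (cont1 w)).intervalIntegrable 0 1)
    ((cont2 (N - 1)).intervalIntegrable 0 1)
  have hN0 : (N : ℂ) ≠ 0 := Nat.cast_ne_zero.mpr (by omega)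
  have e1 : (∫ t in (0:ℝ)..1, ((1 - t : ℝ) : ℂ) ^ (N - 1) * Complex.exp (-w * t))
      = ∫ t in (0:ℝ)..1, Complex.exp (-w * t) * ((1 - t : ℝ) : ℂ) ^ (N - 1) := by
    congr 1
    ext t
    ring
  rw [e1, h]
  have e2 : (∫ t in (0:ℝ)..1, -w * Complex.exp (-w * t) * (-((1 - t : ℝ) : ℂ) ^ N / (N : ℂ)))
      = (w / N) * ∫ t in (0:ℝ)..1, ((1 - t : ℝ) : ℂ) ^ N * Complex.exp (-w * t) := by
    rw [← intervalIntegral.integral_const_mul]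
    congr 1
    ext t
    field_simp
  rw [e2]
  norm_num [zero_pow (show N ≠ 0 by omega), Complex.exp_zero]
  rw [neg_div, neg_neg, one_div]

lemma exp_taylor (w : ℂ) (hw : w ≠ 0) (N : ℕ) (hN : 1 ≤ N) :
    Complex.exp (-w) = ∑ k ∈ Finset.range N, (-w) ^ k / (k.factorial : ℂ)
      + (-1 : ℂ) ^ N * w ^ N / (((N - 1).factorial : ℕ) : ℂ) *
        ∫ t in (0:ℝ)..1, ((1 - t : ℝ) : ℂ) ^ (N - 1) * Complex.exp (-w * t) := by
  induction N, hN using Nat.le_induction with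
  | base =>
    have hw' : -w ≠ 0 := neg_ne_zero.mpr hw
    have hint : (∫ t in (0:ℝ)..1, ((1 - t : ℝ) : ℂ) ^ (1 - 1) * Complex.exp (-w * t))
        = (Complex.exp (-w) - 1) / (-w) := by
      simp only [Nat.sub_self, pow_zero, one_mul]
      rw [integral_exp_mul_complex hw']
      norm_num
    rw [hint]
    simp only [Finset.range_one, Finset.sum_singleton, pow_zero, Nat.factorial_zero,
      Nat.sub_self, Nat.cast_one, pow_one]
    field_simp
    ring
  | succ N hN ih =>
    rw [ibp w N hN] at ih
    rw [Finset.sum_range_succ, Nat.add_sub_cancel, ih]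
    have hfac : ((N.factorial : ℕ) : ℂ) = (N : ℂ) * (((N - 1).factorial : ℕ) : ℂ) := by
      rw [← Nat.cast_mul, Nat.mul_factorial_pred (by omega)]
    have h1 : ((N.factorial : ℕ) : ℂ) ≠ 0 := Nat.cast_ne_zero.mpr (Nat.factorial_ne_zero N)
    have h2 : (((N - 1).factorial : ℕ) : ℂ) ≠ 0 := Nat.cast_ne_zero.mpr (Nat.factorial_ne_zero _)
    have h3 : (N : ℂ) ≠ 0 := Nat.cast_ne_zero.mpr (by omega)
    set I : ℂ := ∫ t in (0:ℝ)..1, ((1 - t : ℝ) : ℂ) ^ N * Complex.exp (-w * t)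
    rw [hfac]
    field_simp
    ring

-- norm of exp of the quadratic piece
lemma re_quad (n : ℕ) (z : ℂ) (t : ℝ) :
    (-((n : ℂ) + 1) ^ 2 * z * (t : ℝ)).re = -(((n : ℝ) + 1) ^ 2 * t) * z.re := by
  rw [show -((n : ℂ) + 1) ^ 2 * z * (t : ℝ) = ((-(((n : ℝ) + 1) ^ 2 * t) : ℝ) : ℂ) * z by
    push_cast; ring]
  rw [Complex.re_ofReal_mul]

lemma norm_c_le (n : ℕ) (z : ℂ) (hz : 0 < z.re) {t : ℝ} (ht : 0 ≤ t) :
    ‖(-1 : ℂ) ^ n * Complex.exp (-((n : ℂ) + 1) ^ 2 * z * (t : ℝ))‖ ≤ 1 := by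
  rw [norm_mul, norm_pow, norm_neg, norm_one, one_pow, one_mul,
    Complex.norm_exp, re_quad]
  apply Real.exp_le_one_iff.mpr
  have h1 : (0:ℝ) ≤ ((n : ℝ) + 1) ^ 2 * t := by positivity
  nlinarith


lemma neg_pow_aux (x : ℂ) (k m : ℕ) : (-x) ^ (2*k + m) = (x^2)^k * (-1)^m * x^m := by
  rw [pow_add, pow_mul, neg_sq, neg_pow]; ring

lemma neg_one_sq_pow (ℓ : ℕ) : ((-1:ℂ)^ℓ) * ((-1:ℂ)^ℓ) = 1 := by
  rw [← mul_pow]; norm_num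

/-- Taylor expansion with integral remainder for the false theta series:
for `Re z > 0`, `Re α > 0`, `ℓ ≥ 0` and `N ≥ 1`,
`∑_{n≥1}(-1)^{n-1} n^ℓ e^{-n²z-nα}
  = (-1)^ℓ ∑_{k<N} ((-z)^k/k!) ∂_α^{2k+ℓ}[1/(1+e^α)] + z^N R_N(ℓ,α,z)`. -/
theorem false_theta_taylor (ℓ : ℕ) (N : ℕ) (hN : 1 ≤ N) (α z : ℂ)
    (hz : 0 < z.re) (hα : 0 < α.re) :
    ∑' n : ℕ, (-1 : ℂ) ^ n * ((n : ℂ) + 1) ^ ℓ *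
        Complex.exp (-((n : ℂ) + 1) ^ 2 * z - ((n : ℂ) + 1) * α)
      = (-1 : ℂ) ^ ℓ * ∑ k ∈ Finset.range N, (-z) ^ k / (k.factorial : ℂ) *
            iteratedDeriv (2 * k + ℓ) (fun β : ℂ => 1 / (1 + Complex.exp β)) α
        + z ^ N *
          ((-1 : ℂ) ^ (N + ℓ) / ((N - 1).factorial : ℂ) *
            ∫ t in (0 : ℝ)..1, ((1 - t : ℝ) : ℂ) ^ (N - 1) *
              iteratedDeriv (2 * N + ℓ)
                (fun β : ℂ => ∑' n : ℕ, (-1 : ℂ) ^ n *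
                  Complex.exp (-((n : ℂ) + 1) ^ 2 * z * (t : ℂ) - ((n : ℂ) + 1) * β))
                α) := by
  set A : ℕ → ℂ := fun n => ∑ k ∈ Finset.range N,
    (-1 : ℂ) ^ ℓ * ((-z) ^ k / (k.factorial : ℂ)) *
      ((-1 : ℂ) ^ n * (-((n : ℂ) + 1)) ^ (2 * k + ℓ) * Complex.exp (-((n : ℂ) + 1) * α)) with hA
  set F : ℕ → ℝ → ℂ := fun n t => ((1 - t : ℝ) : ℂ) ^ (N - 1) *
    (((-1 : ℂ) ^ n * Complex.exp (-((n : ℂ) + 1) ^ 2 * z * (t : ℝ))) *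
      (-((n : ℂ) + 1)) ^ (2 * N + ℓ) * Complex.exp (-((n : ℂ) + 1) * α)) with hF
  set c0 : ℂ := (-1 : ℂ) ^ (N + ℓ) / ((N - 1).factorial : ℂ) with hc0
  -- per-term identity
  have key : ∀ n : ℕ, (-1 : ℂ) ^ n * ((n : ℂ) + 1) ^ ℓ *
      Complex.exp (-((n : ℂ) + 1) ^ 2 * z - ((n : ℂ) + 1) * α)
      = A n + z ^ N * c0 * ∫ t in (0 : ℝ)..1, F n t := by
    intro n
    have ha0 : ((n : ℂ) + 1) ≠ 0 := by
      rw [show ((n : ℂ) + 1) = ((n + 1 : ℕ) : ℂ) by push_cast; ring]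
      exact Nat.cast_ne_zero.mpr (by omega)
    have hz0 : z ≠ 0 := fun h => by simp [h] at hz
    have hw : ((n : ℂ) + 1) ^ 2 * z ≠ 0 := mul_ne_zero (pow_ne_zero 2 ha0) hz0
    have ht := exp_taylor (((n : ℂ) + 1) ^ 2 * z) hw N hN
    have hsplit : Complex.exp (-((n : ℂ) + 1) ^ 2 * z - ((n : ℂ) + 1) * α)
        = Complex.exp (-(((n : ℂ) + 1) ^ 2 * z)) * Complex.exp (-((n : ℂ) + 1) * α) := by
      rw [← Complex.exp_add]; congr 1; ring
    have hI : (∫ t in (0 : ℝ)..1, F n t)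
        = ((-1 : ℂ) ^ n * (-((n : ℂ) + 1)) ^ (2 * N + ℓ) * Complex.exp (-((n : ℂ) + 1) * α))
          * ∫ t in (0 : ℝ)..1, ((1 - t : ℝ) : ℂ) ^ (N - 1) *
              Complex.exp (-(((n : ℂ) + 1) ^ 2 * z) * (t : ℝ)) := by
      rw [← intervalIntegral.integral_const_mul]
      apply intervalIntegral.integral_congr
      intro t _
      simp only [hF]
      rw [show -((n : ℂ) + 1) ^ 2 * z * (t : ℝ) = -(((n : ℂ) + 1) ^ 2 * z) * (t : ℝ) by ring]
      ring
    rw [hsplit, ht, hI, hA, hc0, add_mul, mul_add, Finset.sum_mul, Finset.mul_sum]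
    congr 1
    · refine Finset.sum_congr rfl fun k _ => ?_
      rw [neg_pow_aux, show -((((n:ℂ)+1))^2*z) = (((n:ℂ)+1))^2 * -z from by ring, mul_pow]
      linear_combination (-(((((n:ℂ)+1))^2)^k * (-z)^k/(k.factorial:ℂ) * (-1:ℂ)^n *
        (((n:ℂ)+1))^ℓ * Complex.exp (-((n:ℂ)+1) * α))) * neg_one_sq_pow ℓ
    · rw [neg_pow_aux, mul_pow, pow_add]
      linear_combination (-(((((n:ℂ)+1))^2)^N * z^N / (((N-1).factorial : ℕ) : ℂ) * (-1:ℂ)^N *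
        (-1:ℂ)^n * (((n:ℂ)+1))^ℓ * Complex.exp (-((n:ℂ)+1) * α) *
        (∫ t in (0:ℝ)..1, ((1 - t : ℝ) : ℂ) ^ (N - 1) *
          Complex.exp (-((((n:ℂ)+1)) ^ 2 * z) * (t : ℝ))))) * neg_one_sq_pow ℓ
  -- summability of each derivative series
  have hTsum : ∀ m : ℕ, Summable fun n : ℕ =>
      (-1 : ℂ) ^ n * (-((n : ℂ) + 1)) ^ m * Complex.exp (-((n : ℂ) + 1) * α) :=
    fun m => summable_term _ (fun n => by simp) m hα
  have hAsum : Summable A := by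
    rw [hA]
    apply summable_sum
    intro k _
    exact (hTsum (2 * k + ℓ)).mul_left _
  have hFcont : ∀ n : ℕ, Continuous (F n) := by
    intro n
    rw [hF]
    apply (cont2 (N - 1)).mul
    exact ((continuous_const.mul (Complex.continuous_exp.comp
      (continuous_const.mul Complex.continuous_ofReal))).mul continuous_const).mul
      continuous_const
  have hFbound : ∀ n : ℕ, ∀ t : ℝ, t ∈ Set.Ioc (0:ℝ) 1 →
      ‖F n t‖ ≤ ((n : ℝ) + 1) ^ (2 * N + ℓ) * Real.exp (-((n : ℝ) + 1) * α.re) := by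
    intro n t ht
    rw [hF]
    have h1 : ‖((1 - t : ℝ) : ℂ) ^ (N - 1)‖ ≤ 1 := by
      rw [norm_pow, Complex.norm_real, Real.norm_eq_abs]
      apply pow_le_one₀ (abs_nonneg _)
      rw [abs_le]
      constructor <;> [linarith [ht.2]; linarith [ht.1]]
    have h2 := norm_term_le (fun n => (-1 : ℂ) ^ n * Complex.exp (-((n : ℂ) + 1) ^ 2 * z * (t : ℝ)))
      (fun n => norm_c_le n z hz (le_of_lt ht.1)) (2 * N + ℓ) n (le_refl α.re)
    rw [norm_mul]
    calc ‖((1 - t : ℝ) : ℂ) ^ (N - 1)‖ * ‖(-1 : ℂ) ^ n * Complex.exp (-((n : ℂ) + 1) ^ 2 * z * (t : ℝ)) * (-((n : ℂ) + 1)) ^ (2 * N + ℓ) * Complex.exp (-((n : ℂ) + 1) * α)‖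
        ≤ 1 * (((n : ℝ) + 1) ^ (2 * N + ℓ) * Real.exp (-((n : ℝ) + 1) * α.re)) :=
          mul_le_mul h1 h2 (norm_nonneg _) zero_le_one
      _ = ((n : ℝ) + 1) ^ (2 * N + ℓ) * Real.exp (-((n : ℝ) + 1) * α.re) := one_mul _
  have hFintsum : Summable fun n : ℕ => ∫ t in (0:ℝ)..1, F n t := by
    apply Summable.of_norm_bounded (summable_aux (2 * N + ℓ) hα)
    intro n
    have h := intervalIntegral.norm_integral_le_of_norm_le_const
      (C := ((n : ℝ) + 1) ^ (2 * N + ℓ) * Real.exp (-((n : ℝ) + 1) * α.re))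
      (f := F n) (a := 0) (b := 1) (by
        intro t ht
        rw [Set.uIoc_of_le (by norm_num : (0:ℝ) ≤ 1)] at ht
        exact hFbound n t ht)
    simpa using h
  have hBsum : Summable fun n : ℕ => z ^ N * c0 * ∫ t in (0:ℝ)..1, F n t :=
    hFintsum.mul_left _
  -- part 1 : the finite sum of iterated derivatives
  have hpart1 : (-1 : ℂ) ^ ℓ * ∑ k ∈ Finset.range N, (-z) ^ k / (k.factorial : ℂ) *
        iteratedDeriv (2 * k + ℓ) (fun β : ℂ => 1 / (1 + Complex.exp β)) α
      = ∑' n : ℕ, A n := by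
    rw [hA, Summable.tsum_finsetSum (fun k _ => (hTsum (2 * k + ℓ)).mul_left _), Finset.mul_sum]
    apply Finset.sum_congr rfl
    intro k _
    rw [iteratedDeriv_one_div (2 * k + ℓ) hα, tsum_mul_left, ← mul_assoc]
  -- part 2 : the remainder integral
  have hswap : (∫ t in (0:ℝ)..1, ∑' n : ℕ, F n t) = ∑' n : ℕ, ∫ t in (0:ℝ)..1, F n t := by
    rw [intervalIntegral.integral_of_le (by norm_num : (0:ℝ) ≤ 1)]
    rw [← MeasureTheory.integral_tsum_of_summable_integral_norm]
    · apply tsum_congr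
      intro n
      rw [intervalIntegral.integral_of_le (by norm_num : (0:ℝ) ≤ 1)]
    · exact fun n => ((hFcont n).integrableOn_Ioc)
    · apply Summable.of_norm_bounded (summable_aux (2 * N + ℓ) hα)
      intro n
      rw [Real.norm_eq_abs, abs_of_nonneg (MeasureTheory.integral_nonneg (fun t => norm_nonneg _))]
      calc (∫ t in Set.Ioc (0:ℝ) 1, ‖F n t‖)
          ≤ ∫ _t in Set.Ioc (0:ℝ) 1, ((n : ℝ) + 1) ^ (2 * N + ℓ) * Real.exp (-((n : ℝ) + 1) * α.re) := by
            apply MeasureTheory.setIntegral_mono_on ((hFcont n).integrableOn_Ioc).norm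
              ((MeasureTheory.integrableOn_const_iff).mpr (Or.inr (by simp)))
              measurableSet_Ioc
            exact hFbound n
        _ = ((n : ℝ) + 1) ^ (2 * N + ℓ) * Real.exp (-((n : ℝ) + 1) * α.re) := by
            simp [Real.volume_Ioc]
  have hint_eq : (∫ t in (0:ℝ)..1, ((1 - t : ℝ) : ℂ) ^ (N - 1) *
        iteratedDeriv (2 * N + ℓ)
          (fun β : ℂ => ∑' n : ℕ, (-1 : ℂ) ^ n *
            Complex.exp (-((n : ℂ) + 1) ^ 2 * z * (t : ℂ) - ((n : ℂ) + 1) * β)) α)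
      = ∫ t in (0:ℝ)..1, ∑' n : ℕ, F n t := by
    apply intervalIntegral.integral_congr
    intro t ht
    rw [Set.uIcc_of_le (by norm_num : (0:ℝ) ≤ 1)] at ht
    dsimp only
    have hfun : (fun β : ℂ => ∑' n : ℕ, (-1 : ℂ) ^ n *
          Complex.exp (-((n : ℂ) + 1) ^ 2 * z * (t : ℂ) - ((n : ℂ) + 1) * β))
        = fun β : ℂ => ∑' n : ℕ, ((-1 : ℂ) ^ n * Complex.exp (-((n : ℂ) + 1) ^ 2 * z * (t : ℝ)))
            * Complex.exp (-((n : ℂ) + 1) * β) := by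
      funext β
      apply tsum_congr
      intro n
      have harg : -((n : ℂ) + 1) ^ 2 * z * (t : ℂ) - ((n : ℂ) + 1) * β
          = (-((n : ℂ) + 1) ^ 2 * z * (t : ℝ)) + (-((n : ℂ) + 1) * β) := by ring
      rw [harg, Complex.exp_add, ← mul_assoc]
    rw [hfun, iteratedDeriv_series _ (fun n => norm_c_le n z hz ht.1) (2 * N + ℓ) α hα,
      ← tsum_mul_left]
  -- final assembly
  rw [tsum_congr key, Summable.tsum_add hAsum hBsum, hpart1, hint_eq, hswap, tsum_mul_left, mul_assoc]
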